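/- In a graph where every vertex has at most Δ neighbors, the greedy MWIS solution achieves total weight at least 1/(Δ+1) times the weight of a maximum-weight independent set, assuming all weights are nonnegative. -/

import Mathlib

open Classical in
/-- Greedy MWIS (nonnegative-weight version): process vertices of the list in
order, adding a vertex to the accumulated set `S` if it has no neighbor in
`S`. -/
noncomputable def greedyMWIS {E : Type*} (G : SimpleGraph E) :
    List E → Finset E → Finset E
  | [], S => S
  | v :: rest, S =>
      greedyMWIS G rest (if ∀ u ∈ S, ¬ G.Adj v u then insert v S else S)

open Classical in
lemma greedyMWIS_mono {E : Type*} (G : SimpleGraph E) :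
    ∀ (L : List E) (S : Finset E), S ⊆ greedyMWIS G L S
  | [], S => by simp [greedyMWIS]
  | v :: rest, S => by
      rw [greedyMWIS]
      split
      · exact (Finset.subset_insert v S).trans (greedyMWIS_mono G rest _)
      · exact greedyMWIS_mono G rest S

open Classical in
lemma greedyMWIS_cover {E : Type*} (G : SimpleGraph E) (ω : E → ℝ) :
    ∀ (L : List E) (S : Finset E),
      L.Pairwise (fun a b => ω b ≤ ω a) →
      (∀ u ∈ S, ∀ v ∈ L, ω v ≤ ω u) →
      ∀ v ∈ L, ∃ u ∈ greedyMWIS G L S, ω v ≤ ω u ∧ (u = v ∨ G.Adj v u)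
  | [], S, _, _, v, hv => by simp at hv
  | a :: rest, S, hsorted, hS, v, hv => by
      rw [List.pairwise_cons] at hsorted
      obtain ⟨ha, hrest⟩ := hsorted
      rw [greedyMWIS]
      have hsub : S ⊆ (if ∀ u ∈ S, ¬ G.Adj a u then insert a S else S) := by
        split
        · exact Finset.subset_insert a S
        · exact subset_rfl
      have hS' : ∀ u ∈ (if ∀ u ∈ S, ¬ G.Adj a u then insert a S else S),
          ∀ w ∈ rest, ω w ≤ ω u := by
        intro u hu w hw
        by_cases hc : ∀ u ∈ S, ¬ G.Adj a u
        · rw [if_pos hc] at hu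
          rcases Finset.mem_insert.1 hu with rfl | hu
          · exact ha w hw
          · exact hS u hu w (List.mem_cons_of_mem a hw)
        · rw [if_neg hc] at hu
          exact hS u hu w (List.mem_cons_of_mem a hw)
      rcases List.mem_cons.1 hv with rfl | hv
      · by_cases hc : ∀ u ∈ S, ¬ G.Adj v u
        · refine ⟨v, ?_, le_refl _, Or.inl rfl⟩
          have : v ∈ (if ∀ u ∈ S, ¬ G.Adj v u then insert v S else S) := by
            rw [if_pos hc]; exact Finset.mem_insert_self v S
          exact greedyMWIS_mono G rest _ this
        · push_neg at hc
          obtain ⟨u, hu, hadj⟩ := hc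
          refine ⟨u, greedyMWIS_mono G rest _ (hsub hu), hS u hu v List.mem_cons_self,
            Or.inr hadj⟩
      · exact greedyMWIS_cover G ω rest _ hrest hS' v hv

/-- In a graph of maximum degree `Δ` with nonnegative vertex
weights, the greedy MWIS solution (processing vertices in non-increasing weight
order) achieves total weight at least `1/(Δ+1)` times the weight of any
independent set, in particular of a maximum-weight independent set. -/
theorem greedyMWIS_approximation
    {E : Type*} [Fintype E] [DecidableEq E]
    (G : SimpleGraph E) [DecidableRel G.Adj] (ω : E → ℝ) (Δ : ℕ)
    (hdeg : ∀ v : E, G.degree v ≤ Δ)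
    (hω : ∀ v : E, 0 ≤ ω v)
    (L : List E)
    (hsorted : L.Pairwise (fun a b => ω b ≤ ω a))
    (hnodup : L.Nodup) (hall : ∀ v : E, v ∈ L) :
    ∀ I : Finset E, (∀ u ∈ I, ∀ v ∈ I, ¬ G.Adj u v) →
      ∑ v ∈ I, ω v ≤ ((Δ : ℝ) + 1) * ∑ v ∈ greedyMWIS G L ∅, ω v := by
  classical
  intro I _hI
  set T := greedyMWIS G L ∅ with hT
  have hcov : ∀ v : E, ∃ u ∈ T, ω v ≤ ω u ∧ (u = v ∨ G.Adj v u) := by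
    intro v
    exact greedyMWIS_cover G ω L ∅ hsorted (by simp) v (hall v)
  choose f hfT hfw hfadj using hcov
  have key : ∑ u ∈ T, ∑ v ∈ I.filter (fun v => f v = u), ω v = ∑ v ∈ I, ω v :=
    Finset.sum_fiberwise_of_maps_to (fun v _ => hfT v) ω
  rw [← key, Finset.mul_sum]
  apply Finset.sum_le_sum
  intro u hu
  set F := I.filter (fun v => f v = u) with hF
  have hFsub : F ⊆ insert u (G.neighborFinset u) := by
    intro v hv
    rw [hF, Finset.mem_filter] at hv
    obtain ⟨_, hfv⟩ := hv
    rcases hfadj v with h | h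
    · rw [hfv] at h; exact Finset.mem_insert.2 (Or.inl h.symm)
    · rw [hfv] at h
      exact Finset.mem_insert.2 (Or.inr ((G.mem_neighborFinset u v).2 h.symm))
  have hcard : (F.card : ℝ) ≤ (Δ : ℝ) + 1 := by
    have h1 : F.card ≤ (insert u (G.neighborFinset u)).card := Finset.card_le_card hFsub
    have h2 : (insert u (G.neighborFinset u)).card ≤ G.degree u + 1 := by
      rw [← G.card_neighborFinset_eq_degree]
      calc (insert u (G.neighborFinset u)).card ≤ (G.neighborFinset u).card + 1 :=
            Finset.card_insert_le _ _
        _ = _ := rfl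
    have := h1.trans (h2.trans (Nat.add_le_add_right (hdeg u) 1))
    exact_mod_cast this
  have hbound : ∀ v ∈ F, ω v ≤ ω u := by
    intro v hv
    rw [hF, Finset.mem_filter] at hv
    have := hfw v
    rwa [hv.2] at this
  calc ∑ v ∈ F, ω v ≤ ∑ _v ∈ F, ω u := Finset.sum_le_sum hbound
    _ = (F.card : ℝ) * ω u := by rw [Finset.sum_const, nsmul_eq_mul]
    _ ≤ ((Δ : ℝ) + 1) * ω u := mul_le_mul_of_nonneg_right hcard (hω u)
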